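/- Let α ≥ 1 be a real number and let c₁, c₂, d₁, d₂ ≥ 0 satisfy d₁ < c₁ ≤ c₂ < d₂ and c₁ + c₂ > d₁ + d₂. Then c₁^(1/α) + c₂^(1/α) > d₁^(1/α) + d₂^(1/α). -/

import Mathlib

theorem root_sum_inequality (α c₁ c₂ d₁ d₂ : ℝ) (hα : 1 ≤ α)
    (hc₁ : 0 ≤ c₁) (hc₂ : 0 ≤ c₂) (hd₁ : 0 ≤ d₁) (hd₂ : 0 ≤ d₂)
    (h1 : d₁ < c₁) (h2 : c₁ ≤ c₂) (h3 : c₂ < d₂)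
    (hsum : c₁ + c₂ > d₁ + d₂) :
    c₁ ^ (1/α) + c₂ ^ (1/α) > d₁ ^ (1/α) + d₂ ^ (1/α) := by
  set p := 1/α with hp
  have hα0 : 0 < α := lt_of_lt_of_le one_pos hα
  have hp0 : 0 < p := by positivity
  have hp1 : p ≤ 1 := by
    rw [hp, div_le_one hα0]; exact hα
  have hconc := Real.concaveOn_rpow hp0.le hp1
  set t := c₁ - d₁ with ht
  have ht0 : 0 < t := by simp [ht]; linarith
  set D := c₂ + t - d₁ with hD
  have hD0 : 0 < D := by simp [hD]; linarith
  set lam := (c₂ - d₁) / D with hlam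
  set mu := t / D with hmu
  have hlam0 : 0 ≤ lam := by apply div_nonneg (by linarith) hD0.le
  have hmu0 : 0 ≤ mu := by positivity
  have hab : lam + mu = 1 := by
    rw [hlam, hmu, ← add_div, div_eq_one_iff_eq hD0.ne', hD]
    ring
  have hmem1 : d₁ ∈ Set.Ici (0:ℝ) := hd₁
  have hmem2 : c₂ + t ∈ Set.Ici (0:ℝ) := by simp [ht]; linarith
  have key1 := hconc.2 hmem1 hmem2 hlam0 hmu0 hab
  have key2 := hconc.2 hmem1 hmem2 hmu0 hlam0 (by linarith)
  have e1 : lam • d₁ + mu • (c₂ + t) = d₁ + t := by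
    simp only [smul_eq_mul, hlam, hmu]
    field_simp
    ring
  have e2 : mu • d₁ + lam • (c₂ + t) = c₂ := by
    simp only [smul_eq_mul, hlam, hmu]
    field_simp
    ring
  rw [e1] at key1
  rw [e2] at key2
  simp only [smul_eq_mul] at key1 key2
  have hmu' : mu = 1 - lam := by linarith
  rw [hmu'] at key1 key2
  have hsum2 : d₁ ^ p + (c₂ + t) ^ p ≤ (d₁ + t) ^ p + c₂ ^ p := by
    linarith [key1, key2]
  have hd₁t : d₁ + t = c₁ := by simp [ht]
  rw [hd₁t] at hsum2
  have hlt : d₂ ^ p < (c₂ + t) ^ p := by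
    apply Real.rpow_lt_rpow hd₂ _ hp0
    simp [ht]; linarith
  linarith
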